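/- Let D̄ be the corrupted distribution with D̄_x = D_x and conditional label distribution p·U({1,...,C}) + (1-p)·D_{y|x} for 0 ≤ p < 1. Then for any classifier h, the corrupted risk satisfies L_D̄(h) = (p/C)·E_{x∼D_x}[∑_{k=1}^C L(h(x),k)] + (1-p)·L_D(h). In particular, if L is symmetric with ∑_{k=1}^C L(z,k) = K constant, then L_D̄(h) = (p/C)K + (1-p)L_D(h), so every minimizer of L_D̄ over a hypothesis class is a minimizer of L_D and conversely. -/

import Mathlib

open MeasureTheory
open scoped ENNReal

/-- Risk under uniform label noise: the corrupted risk decomposes as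
`(p/C)·E_x[∑_k L(h(x),k)] + (1-p)·L_D(h)`, and under the symmetry condition the
minimizers of the corrupted risk over a hypothesis class coincide with the
minimizers of the clean risk. -/
theorem stmt_12 {α : Type*} [MeasurableSpace α] (C : ℕ) (hC : 1 ≤ C)
    (D : Measure (α × Fin C)) [IsProbabilityMeasure D]
    (L : (Fin C → ℝ) → Fin C → ℝ) (p : ℝ) (hp0 : 0 ≤ p) (hp1 : p < 1)
    (H : Set (α → Fin C → ℝ)) :
    let Dx : Measure α := D.map Prod.fst
    let uniform : Measure (Fin C) := ((C : ℝ≥0∞))⁻¹ • Measure.count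
    let Dbar : Measure (α × Fin C) :=
      ENNReal.ofReal p • (Dx.prod uniform) + ENNReal.ofReal (1 - p) • D
    let riskD : (α → Fin C → ℝ) → ℝ :=
      fun h => ∫ pr, L (h pr.1) pr.2 ∂D
    let riskDbar : (α → Fin C → ℝ) → ℝ :=
      fun h => ∫ pr, L (h pr.1) pr.2 ∂Dbar
    -- integrability assumptions for every classifier of the hypothesis class
    (∀ h ∈ H, Integrable (fun pr => L (h pr.1) pr.2) D) →
    (∀ h ∈ H, Integrable (fun pr => L (h pr.1) pr.2) (Dx.prod uniform)) →
    -- decomposition of the corrupted risk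
    ((∀ h ∈ H, riskDbar h
        = (p / (C : ℝ)) * (∫ x, ∑ k, L (h x) k ∂Dx) + (1 - p) * riskD h) ∧
    -- under the symmetry condition, minimizers over `H` coincide
    (∀ K : ℝ, (∀ z, ∑ k, L z k = K) →
      ∀ h ∈ H, ((∀ h' ∈ H, riskDbar h ≤ riskDbar h')
        ↔ (∀ h' ∈ H, riskD h ≤ riskD h')))) := by
  intro Dx uniform Dbar riskD riskDbar hID hIP
  have hDx : IsProbabilityMeasure Dx :=
    Measure.isProbabilityMeasure_map measurable_fst.aemeasurable
  have hprod : ∀ h : α → Fin C → ℝ, Integrable (fun pr => L (h pr.1) pr.2) (Dx.prod uniform) →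
      ∫ pr, L (h pr.1) pr.2 ∂(Dx.prod uniform)
        = (1/(C:ℝ)) * ∫ x, ∑ k, L (h x) k ∂Dx := by
    intro h hI
    rw [integral_prod _ hI]
    have hc : ((C : ℝ≥0∞)⁻¹).toReal = 1/(C:ℝ) := by
      simp [ENNReal.toReal_inv]
    have heq : ∀ x : α, ∫ y, L (h x) y ∂uniform = (1/(C:ℝ)) * ∑ k, L (h x) k := by
      intro x
      show ∫ y, L (h x) y ∂(((C : ℝ≥0∞))⁻¹ • Measure.count) = _
      rw [integral_smul_measure, integral_fintype (by exact Integrable.of_finite), hc]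
      simp [smul_eq_mul]
    simp_rw [heq]
    rw [integral_const_mul]
  have key : ∀ h ∈ H, riskDbar h
      = (p / (C : ℝ)) * (∫ x, ∑ k, L (h x) k ∂Dx) + (1 - p) * riskD h := by
    intro h hh
    have h1 := hID h hh
    have h2 := hIP h hh
    show ∫ pr, L (h pr.1) pr.2 ∂Dbar = _
    have : Dbar = ENNReal.ofReal p • (Dx.prod uniform) + ENNReal.ofReal (1 - p) • D := rfl
    rw [this, integral_add_measure (h2.smul_measure ENNReal.ofReal_ne_top)
      (h1.smul_measure ENNReal.ofReal_ne_top), integral_smul_measure, integral_smul_measure,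
      ENNReal.toReal_ofReal hp0, ENNReal.toReal_ofReal (by linarith), hprod h h2]
    show p * (1/(C:ℝ) * _) + (1-p) • riskD h = _
    rw [smul_eq_mul]
    ring
  refine ⟨key, ?_⟩
  intro K hK h hh
  have hval : ∀ h' ∈ H, riskDbar h' = (p / C) * K + (1 - p) * riskD h' := by
    intro h' hh'
    rw [key h' hh']
    congr 2
    simp_rw [hK]
    simp [integral_const]
  have h1p : (0:ℝ) < 1 - p := by linarith
  constructor
  · intro hmin h' hh'
    have := hmin h' hh'
    rw [hval h hh, hval h' hh'] at this
    have := le_of_add_le_add_left this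
    exact le_of_mul_le_mul_left this h1p
  · intro hmin h' hh'
    rw [hval h hh, hval h' hh']
    have := hmin h' hh'
    nlinarith
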